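/- Let S be an abstract simplicial complex of dimension n that is non-branching (every (n−1)-simplex of S is contained in exactly one or exactly two n-simplices of S) and strongly connected (any two n-simplices of S can be joined by a finite sequence of n-simplices in which any two consecutive ones share an (n−1)-element subset that is a simplex of S). Let C^n be the 𝔽₂-vector space of all functions from the set of n-simplices of S to 𝔽₂, for each (n−1)-simplex τ of S let ∂*τ ∈ C^n be the indicator function of the set of n-simplices containing τ, and let B ⊆ C^n be the 𝔽₂-linear span of the functions ∂*τ over all (n−1)-simplices τ contained in exactly two n-simplices. Then the quotient space C^n / B is one-dimensional over 𝔽₂, and for every n-simplex σ of S the image in C^n / B of the indicator function of {σ} is nonzero (hence a basis of C^n / B). -/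
import Mathlib


open scoped Classical
open Finset

/-- An abstract simplicial complex on the vertex type `V`: a finite collection of
nonempty finite subsets (simplices) closed under passing to nonempty subsets. -/
def IsAbstractComplex {V : Type*} (K : Finset (Finset V)) : Prop :=
  (∀ σ ∈ K, σ.Nonempty) ∧ ∀ σ ∈ K, ∀ τ ⊆ σ, τ.Nonempty → τ ∈ K

/-- The type of `n`-simplices of `K` (simplices with `n + 1` vertices). -/
abbrev NSimp {V : Type*} (K : Finset (Finset V)) (n : ℕ) : Type _ :=
  {σ : Finset V // σ ∈ K ∧ σ.card = n + 1}

/-- The `𝔽₂`-vector space `C^n` of all functions from the set of `n`-simplices of `K`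
to `𝔽₂`. -/
abbrev Cochain {V : Type*} (K : Finset (Finset V)) (n : ℕ) : Type _ :=
  NSimp K n → ZMod 2

/-- The coboundary `∂* τ ∈ C^n` of an `(n-1)`-simplex `τ`: the indicator function of
the set of `n`-simplices containing `τ`. -/
noncomputable def cobIndicator {V : Type*} (K : Finset (Finset V)) (n : ℕ)
    (τ : Finset V) : Cochain K n :=
  fun σ => if τ ⊆ σ.1 then 1 else 0

/-- The `𝔽₂`-linear span `B ⊆ C^n` of the coboundaries `∂* τ` over all
`(n-1)`-simplices `τ` of `K` contained in exactly two `n`-simplices of `K`. -/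
noncomputable def essentialCoboundaries {V : Type*} (K : Finset (Finset V)) (n : ℕ) :
    Submodule (ZMod 2) (Cochain K n) :=
  Submodule.span (ZMod 2)
    { f | ∃ τ ∈ K, τ.card = n ∧
        (K.filter fun σ => σ.card = n + 1 ∧ τ ⊆ σ).card = 2 ∧
        f = cobIndicator K n τ }

section Aux

variable {V : Type*} [Fintype V] (K : Finset (Finset V)) (n : ℕ)

/-- The sum-of-values linear map `C^n → 𝔽₂`. -/
noncomputable def sumMap : Cochain K n →ₗ[ZMod 2] ZMod 2 where
  toFun f := ∑ ρ, f ρ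
  map_add' f g := by simp [Finset.sum_add_distrib]
  map_smul' c f := by simp [Finset.mul_sum]

/-- Indicator of a single `n`-simplex. -/
noncomputable def eSimp (σ : Finset V) : Cochain K n :=
  fun ρ => if ρ.1 = σ then 1 else 0

lemma card_filter_eq (τ : Finset V) :
    (univ.filter fun ρ : NSimp K n => τ ⊆ ρ.1).card
      = (K.filter fun σ => σ.card = n + 1 ∧ τ ⊆ σ).card := by
  apply Finset.card_bij (fun ρ _ => ρ.1)
  · intro ρ hρ
    simp only [mem_filter, mem_univ, true_and] at hρ ⊢
    exact ⟨ρ.2.1, ρ.2.2, hρ⟩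
  · intro a ha b hb hab
    exact Subtype.ext hab
  · intro σ hσ
    simp only [mem_filter] at hσ
    exact ⟨⟨σ, hσ.1, hσ.2.1⟩, by simp [hσ.2.2], rfl⟩

lemma sumMap_cob (τ : Finset V)
    (h2 : (K.filter fun σ => σ.card = n + 1 ∧ τ ⊆ σ).card = 2) :
    sumMap K n (cobIndicator K n τ) = 0 := by
  have : sumMap K n (cobIndicator K n τ)
      = ((univ.filter fun ρ : NSimp K n => τ ⊆ ρ.1).card : ZMod 2) := by
    simp [sumMap, cobIndicator, Finset.sum_boole]
  rw [this, card_filter_eq, h2]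
  decide

lemma B_le_ker : essentialCoboundaries K n ≤ LinearMap.ker (sumMap K n) := by
  rw [essentialCoboundaries, Submodule.span_le]
  rintro f ⟨τ, hτK, hτc, h2, rfl⟩
  exact sumMap_cob K n τ h2

lemma sumMap_eSimp (σ : Finset V) (hσ : σ ∈ K) (hc : σ.card = n + 1) :
    sumMap K n (eSimp K n σ) = 1 := by
  have : ∀ ρ : NSimp K n, (ρ.1 = σ) = (ρ = ⟨σ, hσ, hc⟩) := by
    intro ρ; rw [eq_iff_iff, Subtype.ext_iff]
  simp only [sumMap, eSimp, LinearMap.coe_mk, AddHom.coe_mk, this]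
  simp

/-- All single-simplex indicators agree modulo `B`. -/
lemma mk_eSimp_eq
    (hnb : ∀ τ ∈ K, τ.card = n →
      (K.filter fun σ => σ.card = n + 1 ∧ τ ⊆ σ).card = 1 ∨
      (K.filter fun σ => σ.card = n + 1 ∧ τ ⊆ σ).card = 2)
    (hsc : ∀ σ ∈ K, σ.card = n + 1 → ∀ σ' ∈ K, σ'.card = n + 1 →
      ∃ (k : ℕ) (c : ℕ → Finset V), c 0 = σ ∧ c k = σ' ∧
        (∀ i ≤ k, c i ∈ K ∧ (c i).card = n + 1) ∧
        ∀ i < k, ∃ τ ∈ K, τ.card = n ∧ τ ⊆ c i ∧ τ ⊆ c (i + 1))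
    (σ : Finset V) (hσ : σ ∈ K) (hc : σ.card = n + 1)
    (σ' : Finset V) (hσ' : σ' ∈ K) (hc' : σ'.card = n + 1) :
    (Submodule.Quotient.mk (p := essentialCoboundaries K n) (eSimp K n σ))
      = Submodule.Quotient.mk (p := essentialCoboundaries K n) (eSimp K n σ') := by
  obtain ⟨k, c, hc0, hck, hmem, hstep⟩ := hsc σ hσ hc σ' hσ' hc'
  suffices h : ∀ i ≤ k,
      (Submodule.Quotient.mk (p := essentialCoboundaries K n) (eSimp K n (c 0)))
        = Submodule.Quotient.mk (p := essentialCoboundaries K n) (eSimp K n (c i)) by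
    rw [← hc0, ← hck]; exact h k le_rfl
  intro i hi
  induction i with
  | zero => rfl
  | succ j ih =>
    rw [ih (Nat.le_of_succ_le hi)]
    have hj : j < k := hi
    by_cases heq : c j = c (j + 1)
    · rw [heq]
    obtain ⟨τ, hτK, hτc, hτj, hτj1⟩ := hstep j hj
    -- the filter has exactly two elements, c j and c (j+1)
    have hjm := hmem j (le_of_lt hj)
    have hj1m := hmem (j + 1) hj
    have hsub : ({c j, c (j + 1)} : Finset (Finset V))
        ⊆ K.filter fun σ => σ.card = n + 1 ∧ τ ⊆ σ := by
      intro x hx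
      simp only [mem_insert, mem_singleton] at hx
      rcases hx with rfl | rfl
      · exact mem_filter.2 ⟨hjm.1, hjm.2, hτj⟩
      · exact mem_filter.2 ⟨hj1m.1, hj1m.2, hτj1⟩
    have hcard2 : ({c j, c (j + 1)} : Finset (Finset V)).card = 2 := by
      rw [Finset.card_insert_of_notMem (by simpa using heq), Finset.card_singleton]
    have h2 : (K.filter fun σ => σ.card = n + 1 ∧ τ ⊆ σ).card = 2 := by
      rcases hnb τ hτK hτc with h1 | h2
      · exfalso
        have := Finset.card_le_card hsub
        omega
      · exact h2
    have hfeq : (K.filter fun σ => σ.card = n + 1 ∧ τ ⊆ σ)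
        = {c j, c (j + 1)} := by
      symm
      apply Finset.eq_of_subset_of_card_le hsub
      rw [h2, hcard2]
    -- cobIndicator τ = e (c j) + e (c (j+1))
    have hcob : cobIndicator K n τ = eSimp K n (c j) + eSimp K n (c (j + 1)) := by
      funext ρ
      simp only [cobIndicator, eSimp, Pi.add_apply]
      by_cases h1 : ρ.1 = c j
      · have h2' : ρ.1 ≠ c (j + 1) := by rw [h1]; exact heq
        simp [h1, h2', hτj, heq]
      by_cases h2' : ρ.1 = c (j + 1)
      · simp [h1, h2', hτj1, Ne.symm heq]
      · have hτρ : ¬ τ ⊆ ρ.1 := by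
          intro hτρ
          have : ρ.1 ∈ K.filter fun σ => σ.card = n + 1 ∧ τ ⊆ σ :=
            mem_filter.2 ⟨ρ.2.1, ρ.2.2, hτρ⟩
          rw [hfeq] at this
          simp only [mem_insert, mem_singleton] at this
          tauto
        simp [h1, h2', hτρ]
    have hB : eSimp K n (c j) - eSimp K n (c (j + 1)) ∈ essentialCoboundaries K n := by
      have hmemgen : cobIndicator K n τ ∈ essentialCoboundaries K n :=
        Submodule.subset_span ⟨τ, hτK, hτc, h2, rfl⟩
      have : eSimp K n (c j) - eSimp K n (c (j + 1)) = cobIndicator K n τ := by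
        rw [hcob]
        funext ρ
        simp only [Pi.sub_apply, Pi.add_apply]
        ring_nf
        rw [CharTwo.sub_eq_add]
      rw [this]; exact hmemgen
    exact (Submodule.Quotient.eq _).2 hB

end Aux


/-- For a non-branching, strongly connected abstract simplicial complex `S` of
dimension `n`, the quotient `C^n / B` is one-dimensional over `𝔽₂`, and the image in
`C^n / B` of the indicator function of any `n`-simplex is nonzero (hence a basis). -/
theorem top_cohomology_of_pseudomanifold {V : Type*} [Fintype V]
    (K : Finset (Finset V)) (hK : IsAbstractComplex K) (n : ℕ)
    (hdim : (∃ σ ∈ K, σ.card = n + 1) ∧ ∀ σ ∈ K, σ.card ≤ n + 1)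
    (hnb : ∀ τ ∈ K, τ.card = n →
      (K.filter fun σ => σ.card = n + 1 ∧ τ ⊆ σ).card = 1 ∨
      (K.filter fun σ => σ.card = n + 1 ∧ τ ⊆ σ).card = 2)
    (hsc : ∀ σ ∈ K, σ.card = n + 1 → ∀ σ' ∈ K, σ'.card = n + 1 →
      ∃ (k : ℕ) (c : ℕ → Finset V), c 0 = σ ∧ c k = σ' ∧
        (∀ i ≤ k, c i ∈ K ∧ (c i).card = n + 1) ∧
        ∀ i < k, ∃ τ ∈ K, τ.card = n ∧ τ ⊆ c i ∧ τ ⊆ c (i + 1)) :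
    Module.rank (ZMod 2) (Cochain K n ⧸ essentialCoboundaries K n) = 1 ∧
    ∀ (σ : Finset V), σ ∈ K → σ.card = n + 1 →
      (Submodule.Quotient.mk (p := essentialCoboundaries K n)
        (fun ρ : NSimp K n => if ρ.1 = σ then 1 else 0)) ≠ 0 := by
  obtain ⟨⟨σ₀, hσ₀, hc₀⟩, hdim2⟩ := hdim
  set B := essentialCoboundaries K n with hB
  -- induced map on the quotient
  let φ : (Cochain K n ⧸ B) →ₗ[ZMod 2] ZMod 2 :=
    Submodule.liftQ B (sumMap K n) (B_le_ker K n)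
  have hφmk : ∀ f : Cochain K n, φ (Submodule.Quotient.mk f) = sumMap K n f :=
    fun f => rfl
  -- every quotient element is φ f • mk (eSimp σ₀)
  have hrep : ∀ f : Cochain K n,
      (Submodule.Quotient.mk (p := B) f)
        = sumMap K n f • Submodule.Quotient.mk (p := B) (eSimp K n σ₀) := by
    intro f
    have hdecomp : f = ∑ ρ : NSimp K n, f ρ • eSimp K n ρ.1 := by
      funext x
      have : ∀ ρ : NSimp K n, (x.1 = ρ.1) = (x = ρ) := fun ρ => by
        rw [eq_iff_iff, Subtype.ext_iff]
      simp only [Finset.sum_apply, Pi.smul_apply, eSimp, smul_eq_mul, this]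
      simp
    calc (Submodule.Quotient.mk (p := B) f)
        = ∑ ρ : NSimp K n, f ρ • Submodule.Quotient.mk (p := B) (eSimp K n ρ.1) := by
          conv_lhs => rw [hdecomp]
          simp only [← Submodule.mkQ_apply, map_sum, map_smul]
      _ = ∑ ρ : NSimp K n, f ρ • Submodule.Quotient.mk (p := B) (eSimp K n σ₀) := by
          refine Finset.sum_congr rfl fun ρ _ => ?_
          rw [mk_eSimp_eq K n hnb hsc ρ.1 ρ.2.1 ρ.2.2 σ₀ hσ₀ hc₀]
      _ = (∑ ρ : NSimp K n, f ρ) • Submodule.Quotient.mk (p := B) (eSimp K n σ₀) := by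
          rw [Finset.sum_smul]
      _ = sumMap K n f • Submodule.Quotient.mk (p := B) (eSimp K n σ₀) := rfl
  have hφe : φ (Submodule.Quotient.mk (p := B) (eSimp K n σ₀)) = 1 := by
    rw [hφmk]; exact sumMap_eSimp K n σ₀ hσ₀ hc₀
  -- the quotient is linearly equivalent to ZMod 2
  let ψ : ZMod 2 →ₗ[ZMod 2] (Cochain K n ⧸ B) :=
    LinearMap.toSpanSingleton (ZMod 2) _ (Submodule.Quotient.mk (p := B) (eSimp K n σ₀))
  have hψφ : ψ.comp φ = LinearMap.id := by
    apply LinearMap.ext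
    intro q
    obtain ⟨f, rfl⟩ := Submodule.Quotient.mk_surjective B q
    simp only [LinearMap.comp_apply, LinearMap.id_apply, hφmk]
    rw [hrep f]
    simp [ψ, LinearMap.toSpanSingleton_apply]
  have hφψ : φ.comp ψ = LinearMap.id := by
    apply LinearMap.ext
    intro c
    simp only [LinearMap.comp_apply, LinearMap.id_apply, ψ,
      LinearMap.toSpanSingleton_apply, map_smul, hφe, smul_eq_mul, mul_one]
  let e : (Cochain K n ⧸ B) ≃ₗ[ZMod 2] ZMod 2 := LinearEquiv.ofLinear φ ψ hφψ hψφ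
  constructor
  · have h := LinearEquiv.lift_rank_eq e
    rw [Module.rank_self, Cardinal.lift_one, Cardinal.lift_eq_one] at h
    exact h
  · intro σ hσ hcσ h0
    have : φ (Submodule.Quotient.mk (p := B) (eSimp K n σ)) = 1 := by
      rw [hφmk]; exact sumMap_eSimp K n σ hσ hcσ
    rw [show (fun ρ : NSimp K n => if ρ.1 = σ then 1 else 0) = eSimp K n σ from rfl] at h0
    rw [h0, map_zero] at this
    exact zero_ne_one this
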